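/- Let N be a positive integer, S the real diagonal N×N matrix with entries s_k ∈ {0,1,−1} (S = diag(0,1,…,1,0,−1,…,−1) if N even with s_k = −s_{N−k}, or S = diag(0,1,…,1,−1,…,−1) if N odd with s_k = −s_{N−k} for k ≠ 0), and K̃ the real diagonal matrix with entries k̃_j satisfying k̃_{N−j} = −k̃_j. Then the matrix L_Δ = F^{−1} · (2π/l)·K̃·S · F (where F is the DFT matrix with (F)_{k,n} = exp(−2πi kn/N)) is a real symmetric matrix: L_Δᵀ = L_Δ. -/

import Mathlib

open Matrix

/-- The DFT matrix. -/
noncomputable def dftMatrix (N : ℕ) : Matrix (ZMod N) (ZMod N) ℂ :=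
  fun k n => Complex.exp (-2 * Real.pi * Complex.I * (k.val : ℂ) * (n.val : ℂ) / (N : ℂ))

/-- The inverse DFT matrix. -/
noncomputable def idftMatrix (N : ℕ) : Matrix (ZMod N) (ZMod N) ℂ :=
  fun n k => (1 / (N : ℂ)) *
    Complex.exp (2 * Real.pi * Complex.I * (n.val : ℂ) * (k.val : ℂ) / (N : ℂ))

/-- The basic exponential `exp(2πin/N)`. -/
noncomputable def eN (N : ℕ) (n : ℤ) : ℂ :=
  Complex.exp (2 * Real.pi * Complex.I * (n : ℂ) / (N : ℂ))

lemma eN_congr {N : ℕ} [NeZero N] {m n : ℤ} (h : ((m : ZMod N) : ZMod N) = (n : ZMod N)) :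
    eN N m = eN N n := by
  have hmod : m ≡ n [ZMOD (N : ℤ)] := (ZMod.intCast_eq_intCast_iff _ _ _).mp h
  obtain ⟨t, ht⟩ := hmod.dvd
  have hN : (N : ℂ) ≠ 0 := Nat.cast_ne_zero.mpr (NeZero.ne N)
  have hn : (n : ℂ) = (m : ℂ) + (N : ℂ) * (t : ℂ) := by
    have : n = m + (N : ℤ) * t := by linarith
    exact_mod_cast congrArg (Int.cast : ℤ → ℂ) this
  unfold eN
  rw [hn]
  have harg : 2 * (Real.pi : ℂ) * Complex.I * ((m : ℂ) + (N : ℂ) * (t : ℂ)) / (N : ℂ)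
      = 2 * (Real.pi : ℂ) * Complex.I * (m : ℂ) / (N : ℂ) + (t : ℂ) * (2 * (Real.pi : ℂ) * Complex.I) := by
    field_simp
  rw [harg, Complex.exp_add, Complex.exp_int_mul_two_pi_mul_I, mul_one]

lemma eN_star {N : ℕ} (n : ℤ) : (starRingEnd ℂ) (eN N n) = eN N (-n) := by
  unfold eN
  rw [← Complex.exp_conj]
  congr 1
  simp [Complex.conj_I, map_ofNat]

lemma aux_main (N : ℕ) [NeZero N] (d : ZMod N → ℂ) (hd : ∀ k, d (-k) = d k)
    (hdr : ∀ k, (starRingEnd ℂ) (d k) = d k) :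
    (idftMatrix N * Matrix.diagonal d * dftMatrix N)ᵀ
      = idftMatrix N * Matrix.diagonal d * dftMatrix N
    ∧ ∀ i j, ((idftMatrix N * Matrix.diagonal d * dftMatrix N) i j).im = 0 := by
  have hentry : ∀ i j, (idftMatrix N * Matrix.diagonal d * dftMatrix N) i j
      = ∑ k : ZMod N, (1 / (N : ℂ)) * eN N ((i.val : ℤ) * (k.val : ℤ)) * d k
          * eN N (-((k.val : ℤ) * (j.val : ℤ))) := by
    intro i j
    rw [Matrix.mul_apply]
    refine Finset.sum_congr rfl fun k _ => ?_
    rw [Matrix.mul_diagonal]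
    have e1 : Complex.exp (2 * Real.pi * Complex.I * (i.val : ℂ) * (k.val : ℂ) / (N : ℂ))
        = eN N ((i.val : ℤ) * (k.val : ℤ)) := by
      unfold eN; congr 1; push_cast; ring
    have e2 : Complex.exp (-2 * Real.pi * Complex.I * (k.val : ℂ) * (j.val : ℂ) / (N : ℂ))
        = eN N (-((k.val : ℤ) * (j.val : ℤ))) := by
      unfold eN; congr 1; push_cast; ring
    unfold idftMatrix dftMatrix
    rw [e1, e2]
  have eN_mul : ∀ m n : ℤ, eN N m * eN N n = eN N (m + n) := by
    intro m n
    unfold eN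
    rw [← Complex.exp_add]
    congr 1
    push_cast
    ring
  have hterm : ∀ i j k : ZMod N,
      (1 / (N : ℂ)) * eN N ((i.val : ℤ) * (k.val : ℤ)) * d k * eN N (-((k.val : ℤ) * (j.val : ℤ)))
        = (1 / (N : ℂ)) * d k * eN N (((i.val : ℤ) - (j.val : ℤ)) * (k.val : ℤ)) := by
    intro i j k
    have : (1 / (N : ℂ)) * eN N ((i.val : ℤ) * (k.val : ℤ)) * d k * eN N (-((k.val : ℤ) * (j.val : ℤ)))
        = (1 / (N : ℂ)) * d k * (eN N ((i.val : ℤ) * (k.val : ℤ)) * eN N (-((k.val : ℤ) * (j.val : ℤ)))) := by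
      ring
    rw [this, eN_mul]
    congr 1
    ring
  have hvalneg : ∀ (a : ZMod N), (((-a).val : ℤ) : ZMod N) = -((a.val : ℤ) : ZMod N) := by
    intro a
    push_cast
    simp [ZMod.natCast_val, ZMod.cast_id]
  constructor
  · ext i j
    rw [Matrix.transpose_apply, hentry, hentry]
    refine Fintype.sum_equiv (Equiv.neg (ZMod N)) _ _ fun k => ?_
    simp only [Equiv.neg_apply]
    rw [hterm, hterm, hd]
    congr 1
    apply eN_congr
    push_cast [hvalneg]
    simp [ZMod.natCast_val, ZMod.cast_id]
    ring
  · intro i j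
    rw [← Complex.conj_eq_iff_im, hentry, map_sum]
    refine Fintype.sum_equiv (Equiv.neg (ZMod N)) _ _ fun k => ?_
    simp only [Equiv.neg_apply]
    rw [hterm, hterm, hd, _root_.map_mul, _root_.map_mul, eN_star, hdr]
    have hstarN : (starRingEnd ℂ) (1 / (N : ℂ)) = 1 / (N : ℂ) := by simp
    rw [hstarN]
    congr 1
    apply eN_congr
    push_cast [hvalneg]
    simp [ZMod.natCast_val, ZMod.cast_id]

theorem LDelta_symm_real (N : ℕ) [NeZero N] (l : ℝ) (hl : 0 < l)
    (s : ZMod N → ℝ) (hs : ∀ k, s k = 0 ∨ s k = 1 ∨ s k = -1)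
    (hsodd : ∀ k, s (-k) = -s k)
    (ktil : ZMod N → ℝ) (hktil : ∀ j, ktil (-j) = -ktil j) :
    (idftMatrix N * Matrix.diagonal (fun k => ((2 * Real.pi / l) * ktil k * s k : ℂ)) *
        dftMatrix N)ᵀ
      = idftMatrix N * Matrix.diagonal (fun k => ((2 * Real.pi / l) * ktil k * s k : ℂ)) *
          dftMatrix N
    ∧ ∀ i j, ((idftMatrix N * Matrix.diagonal (fun k => ((2 * Real.pi / l) * ktil k * s k : ℂ)) *
        dftMatrix N) i j).im = 0 := by
  apply aux_main
  · intro k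
    rw [hsodd, hktil]
    push_cast
    ring
  · intro k
    simp [map_ofNat, Complex.conj_ofReal, map_div₀]
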